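/- Let G be a group, H a subgroup of index 2, and let ψ and φ be one-dimensional characters of H over a field of characteristic zero. Let ψ' denote the conjugate character ψ'(σ) = ψ(σ₀σσ₀⁻¹) for any fixed σ₀ ∈ G \ H. Then the tensor product of induced representations Ind_H^G(ψ) ⊗ Ind_H^G(φ) is isomorphic to Ind_H^G(ψφ) ⊕ Ind_H^G(ψφ'). -/

import Mathlib

open scoped TensorProduct

/-- The underlying space of the induced representation `Ind_H^G ψ` of a one-dimensional
character `ψ` of `H`: functions `f : G → k` with `f(hg) = ψ(h)·f(g)` for `h ∈ H`. -/
def IndSpace {k G : Type*} [Field k] [Group G] (H : Subgroup G) (ψ : H →* kˣ) :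
    Submodule k (G → k) where
  carrier := {f | ∀ (h : H) (g : G), f (↑h * g) = (ψ h : k) * f g}
  add_mem' := by
    intro a b ha hb h g
    simp only [Pi.add_apply, ha h g, hb h g, mul_add]
  zero_mem' := by intro h g; simp
  smul_mem' := by
    intro c a ha h g
    simp only [Pi.smul_apply, smul_eq_mul, ha h g]
    ring

/-- The induced representation `Ind_H^G ψ`, with `G` acting by right translation. -/
def IndRep {k G : Type*} [Field k] [Group G] (H : Subgroup G) (ψ : H →* kˣ) :
    Representation k G (IndSpace H ψ) where
  toFun g :=
    { toFun := fun f => ⟨fun x => (f : G → k) (x * g), fun h x => by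
        simpa [mul_assoc] using f.2 h (x * g)⟩
      map_add' := fun a b => rfl
      map_smul' := fun c a => rfl }
  map_one' := by
    ext f x
    simp
  map_mul' g₁ g₂ := by
    ext f x
    simp [mul_assoc]

section Aux

variable {k G : Type*} [Field k] [Group G] {H : Subgroup G}

lemma memH_or (hH : H.index = 2) {σ₀ : G} (hσ₀ : σ₀ ∉ H) (x : G) :
    x ∈ H ∨ x * σ₀⁻¹ ∈ H := by
  by_cases hx : x ∈ H
  · exact Or.inl hx
  · right
    rw [Subgroup.mul_mem_iff_of_index_two hH]
    exact iff_of_false hx (fun h => hσ₀ (by simpa using h))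

lemma conj_memH (hH : H.index = 2) {σ₀ : G} (hσ₀ : σ₀ ∉ H) (h : H) :
    σ₀ * (h : G) * σ₀⁻¹ ∈ H := by
  have h1 : σ₀ * (h : G) ∉ H := by
    rw [Subgroup.mul_mem_iff_of_index_two hH]
    simp [hσ₀, h.2]
  rw [Subgroup.mul_mem_iff_of_index_two hH]
  exact iff_of_false h1 (fun h2 => hσ₀ (by simpa using h2))

lemma IndSpace.ext_two (hH : H.index = 2) {σ₀ : G} (hσ₀ : σ₀ ∉ H) {ψ : H →* kˣ}
    {f g : IndSpace H ψ}
    (h1 : (f : G → k) 1 = (g : G → k) 1)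
    (h2 : (f : G → k) σ₀ = (g : G → k) σ₀) : f = g := by
  apply Subtype.ext; funext x
  rcases memH_or hH hσ₀ x with hx | hx
  · have hf := f.2 ⟨x, hx⟩ 1
    have hg := g.2 ⟨x, hx⟩ 1
    simp only [mul_one] at hf hg
    rw [hf, hg, h1]
  · have hf := f.2 ⟨x * σ₀⁻¹, hx⟩ σ₀
    have hg := g.2 ⟨x * σ₀⁻¹, hx⟩ σ₀
    simp only [inv_mul_cancel_right] at hf hg
    rw [hf, hg, h2]

open scoped Classical in
/-- the element of `Ind` with value `a` at `1` and `b` at `σ₀`. -/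
noncomputable def sect (H : Subgroup G) (σ₀ : G) (ψ : H →* kˣ) (a b : k) : G → k :=
  fun x => if hx : x ∈ H then (ψ ⟨x, hx⟩ : k) * a
    else if hx2 : x * σ₀⁻¹ ∈ H then (ψ ⟨x * σ₀⁻¹, hx2⟩ : k) * b else 0

lemma sect_mem (σ₀ : G) (ψ : H →* kˣ) (a b : k) : sect H σ₀ ψ a b ∈ IndSpace H ψ := by
  intro h x
  by_cases hx : x ∈ H
  · have h1 : (h : G) * x ∈ H := mul_mem h.2 hx
    have : (⟨(h : G) * x, h1⟩ : H) = h * ⟨x, hx⟩ := rfl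
    simp only [sect, h1, hx, dif_pos, this, map_mul]
    push_cast; ring
  · have h1 : (h : G) * x ∉ H := fun hm => hx (by simpa using mul_mem (H.inv_mem h.2) hm)
    by_cases hx2 : x * σ₀⁻¹ ∈ H
    · have h2 : (h : G) * x * σ₀⁻¹ ∈ H := by rw [mul_assoc]; exact mul_mem h.2 hx2
      have : (⟨(h : G) * x * σ₀⁻¹, h2⟩ : H) = h * ⟨x * σ₀⁻¹, hx2⟩ := by
        apply Subtype.ext; simp [mul_assoc]
      simp only [sect, hx, h1, hx2, h2, dif_pos, dif_neg, this, map_mul]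
      push_cast; ring
    · have h2 : (h : G) * x * σ₀⁻¹ ∉ H := fun hm => hx2 (by
        have := mul_mem (H.inv_mem h.2) hm
        simpa [mul_assoc] using this)
      simp [sect, hx, h1, hx2, h2]

lemma sect_one (σ₀ : G) (ψ : H →* kˣ) (a b : k) : sect H σ₀ ψ a b 1 = a := by
  simp only [sect, dif_pos H.one_mem]
  rw [show (⟨(1:G), H.one_mem⟩ : H) = 1 from rfl, map_one]
  simp

lemma sect_sigma {σ₀ : G} (hσ₀ : σ₀ ∉ H) (ψ : H →* kˣ) (a b : k) :
    sect H σ₀ ψ a b σ₀ = b := by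
  have h1 : σ₀ * σ₀⁻¹ ∈ H := by simp [H.one_mem]
  have : (⟨σ₀ * σ₀⁻¹, h1⟩ : H) = 1 := by apply Subtype.ext; simp
  simp only [sect, dif_neg hσ₀, dif_pos h1]
  rw [this, map_one]
  simp

lemma sect_sq (hH : H.index = 2) {σ₀ : G} (ψ : H →* kˣ) (a b : k) :
    sect H σ₀ ψ a b (σ₀ * σ₀) = (ψ ⟨σ₀ * σ₀, Subgroup.mul_self_mem_of_index_two hH σ₀⟩ : k) * a := by
  simp only [sect, dif_pos (Subgroup.mul_self_mem_of_index_two hH σ₀)]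

lemma IndSpace.decompose (hH : H.index = 2) {σ₀ : G} (hσ₀ : σ₀ ∉ H) (ψ : H →* kˣ)
    (f : IndSpace H ψ) :
    f = (f : G → k) 1 • (⟨sect H σ₀ ψ 1 0, sect_mem σ₀ ψ 1 0⟩ : IndSpace H ψ)
      + (f : G → k) σ₀ • ⟨sect H σ₀ ψ 0 1, sect_mem σ₀ ψ 0 1⟩ := by
  apply IndSpace.ext_two hH hσ₀ <;>
    simp [sect_one, sect_sigma hσ₀]

end Aux

section Main

variable {k G : Type*} [Field k] [Group G] {H : Subgroup G}

/-- forward bilinear map -/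
def Fmap (hH : H.index = 2) {σ₀ : G} (hσ₀ : σ₀ ∉ H) (ψ φ φ' : H →* kˣ)
    (hφ' : ∀ h h' : H, (h' : G) = σ₀ * h * σ₀⁻¹ → φ' h = φ h') :
    IndSpace H ψ →ₗ[k] IndSpace H φ →ₗ[k]
      (IndSpace H (ψ * φ) × IndSpace H (ψ * φ')) :=
  LinearMap.mk₂ k
    (fun f g =>
      (⟨fun x => (f : G → k) x * (g : G → k) x, by
        intro h x
        simp only [f.2 h x, g.2 h x, MonoidHom.mul_apply, Units.val_mul]
        ring⟩,
       ⟨fun x => (f : G → k) x * (g : G → k) (σ₀ * x), by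
        intro h x
        have hmem := conj_memH hH hσ₀ h
        have hg : (g : G → k) (σ₀ * ((h : G) * x)) = (φ' h : k) * (g : G → k) (σ₀ * x) := by
          have := g.2 ⟨σ₀ * (h : G) * σ₀⁻¹, hmem⟩ (σ₀ * x)
          rw [hφ' h ⟨σ₀ * (h : G) * σ₀⁻¹, hmem⟩ rfl]
          simpa [mul_assoc] using this
        simp only [f.2 h x, hg, MonoidHom.mul_apply, Units.val_mul]
        ring⟩))
    (by intro f f' g
        refine Prod.ext (Subtype.ext ?_) (Subtype.ext ?_) <;> funext x <;> simp [add_mul])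
    (by intro a f g
        refine Prod.ext (Subtype.ext ?_) (Subtype.ext ?_) <;> funext x <;> simp [mul_assoc])
    (by intro f g g'
        refine Prod.ext (Subtype.ext ?_) (Subtype.ext ?_) <;> funext x <;> simp [mul_add])
    (by intro a f g
        refine Prod.ext (Subtype.ext ?_) (Subtype.ext ?_) <;> funext x <;>
          simp [mul_left_comm, mul_comm, mul_assoc])

lemma Fmap_fst (hH : H.index = 2) {σ₀ : G} (hσ₀ : σ₀ ∉ H) (ψ φ φ' : H →* kˣ)
    (hφ' : ∀ h h' : H, (h' : G) = σ₀ * h * σ₀⁻¹ → φ' h = φ h')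
    (f : IndSpace H ψ) (g : IndSpace H φ) (x : G) :
    ((Fmap hH hσ₀ ψ φ φ' hφ' f g).1 : G → k) x = (f : G → k) x * (g : G → k) x := rfl

lemma Fmap_snd (hH : H.index = 2) {σ₀ : G} (hσ₀ : σ₀ ∉ H) (ψ φ φ' : H →* kˣ)
    (hφ' : ∀ h h' : H, (h' : G) = σ₀ * h * σ₀⁻¹ → φ' h = φ h')
    (f : IndSpace H ψ) (g : IndSpace H φ) (x : G) :
    ((Fmap hH hσ₀ ψ φ φ' hφ' f g).2 : G → k) x = (f : G → k) x * (g : G → k) (σ₀ * x) := rfl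

/-- backward linear map -/
noncomputable def Gmap (hH : H.index = 2) (σ₀ : G) (ψ φ φ' : H →* kˣ) :
    (IndSpace H (ψ * φ) × IndSpace H (ψ * φ')) →ₗ[k]
      (IndSpace H ψ ⊗[k] IndSpace H φ) where
  toFun p :=
    (p.1 : G → k) 1 • ((⟨sect H σ₀ ψ 1 0, sect_mem σ₀ ψ 1 0⟩ : IndSpace H ψ)
        ⊗ₜ[k] (⟨sect H σ₀ φ 1 0, sect_mem σ₀ φ 1 0⟩ : IndSpace H φ))
      + (p.1 : G → k) σ₀ • ((⟨sect H σ₀ ψ 0 1, sect_mem σ₀ ψ 0 1⟩ : IndSpace H ψ)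
        ⊗ₜ[k] (⟨sect H σ₀ φ 0 1, sect_mem σ₀ φ 0 1⟩ : IndSpace H φ))
      + (p.2 : G → k) 1 • ((⟨sect H σ₀ ψ 1 0, sect_mem σ₀ ψ 1 0⟩ : IndSpace H ψ)
        ⊗ₜ[k] (⟨sect H σ₀ φ 0 1, sect_mem σ₀ φ 0 1⟩ : IndSpace H φ))
      + (((φ (⟨σ₀ * σ₀, Subgroup.mul_self_mem_of_index_two hH σ₀⟩ : H) : k))⁻¹
            * (p.2 : G → k) σ₀) • ((⟨sect H σ₀ ψ 0 1, sect_mem σ₀ ψ 0 1⟩ : IndSpace H ψ)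
        ⊗ₜ[k] (⟨sect H σ₀ φ 1 0, sect_mem σ₀ φ 1 0⟩ : IndSpace H φ))
  map_add' p q := by
    simp only [Prod.fst_add, Prod.snd_add, Submodule.coe_add, Pi.add_apply, add_smul, mul_add]
    abel
  map_smul' a p := by
    simp only [Prod.smul_fst, Prod.smul_snd, SetLike.val_smul, Pi.smul_apply, smul_eq_mul,
      RingHom.id_apply, smul_add, smul_smul, mul_left_comm]

lemma FG_eq_id (hH : H.index = 2) {σ₀ : G} (hσ₀ : σ₀ ∉ H) (ψ φ φ' : H →* kˣ)
    (hφ' : ∀ h h' : H, (h' : G) = σ₀ * h * σ₀⁻¹ → φ' h = φ h') :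
    (TensorProduct.lift (Fmap hH hσ₀ ψ φ φ' hφ')).comp (Gmap hH σ₀ ψ φ φ')
      = LinearMap.id := by
  have hsq := Subgroup.mul_self_mem_of_index_two hH σ₀
  have hc0 : ((φ (⟨σ₀ * σ₀, hsq⟩ : H) : k)) ≠ 0 := Units.ne_zero _
  apply LinearMap.ext
  rintro ⟨u, v⟩
  refine Prod.ext ?_ ?_
  · apply IndSpace.ext_two hH hσ₀ <;>
    · simp only [LinearMap.comp_apply, Gmap, LinearMap.coe_mk, AddHom.coe_mk, map_add,
        map_smul, TensorProduct.lift.tmul, LinearMap.id_coe, id_eq, Prod.fst_add,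
        Prod.smul_fst, Submodule.coe_add, SetLike.val_smul, Pi.add_apply, Pi.smul_apply,
        smul_eq_mul, Fmap_fst]
      simp [sect_one, sect_sigma hσ₀]
  · apply IndSpace.ext_two hH hσ₀ <;>
    · simp only [LinearMap.comp_apply, Gmap, LinearMap.coe_mk, AddHom.coe_mk, map_add,
        map_smul, TensorProduct.lift.tmul, LinearMap.id_coe, id_eq, Prod.snd_add,
        Prod.smul_snd, Submodule.coe_add, SetLike.val_smul, Pi.add_apply, Pi.smul_apply,
        smul_eq_mul, Fmap_snd]
      simp [sect_one, sect_sigma hσ₀, sect_sq hH, mul_one]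
      try field_simp
  
set_option synthInstance.maxHeartbeats 400000 in
lemma GF_eq_id (hH : H.index = 2) {σ₀ : G} (hσ₀ : σ₀ ∉ H) (ψ φ φ' : H →* kˣ)
    (hφ' : ∀ h h' : H, (h' : G) = σ₀ * h * σ₀⁻¹ → φ' h = φ h') :
    (Gmap hH σ₀ ψ φ φ').comp (TensorProduct.lift (Fmap hH hσ₀ ψ φ φ' hφ'))
      = LinearMap.id := by
  have hsq := Subgroup.mul_self_mem_of_index_two hH σ₀
  have hc0 : ((φ (⟨σ₀ * σ₀, hsq⟩ : H) : k)) ≠ 0 := Units.ne_zero _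
  apply TensorProduct.ext'
  intro f g
  have hgsq : (g : G → k) (σ₀ * σ₀) = (φ (⟨σ₀ * σ₀, hsq⟩ : H) : k) * (g : G → k) 1 := by
    simpa using g.2 ⟨σ₀ * σ₀, hsq⟩ 1
  simp only [LinearMap.comp_apply, TensorProduct.lift.tmul, Gmap, LinearMap.coe_mk,
    AddHom.coe_mk, LinearMap.id_coe, id_eq, Fmap_fst, Fmap_snd, mul_one, hgsq]
  have hcoef : (φ (⟨σ₀ * σ₀, hsq⟩ : H) : k)⁻¹
      * ((f : G → k) σ₀ * ((φ (⟨σ₀ * σ₀, hsq⟩ : H) : k) * (g : G → k) 1))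
      = (f : G → k) σ₀ * (g : G → k) 1 := by
    field_simp
  rw [hcoef]
  conv_rhs => rw [IndSpace.decompose hH hσ₀ ψ f, IndSpace.decompose hH hσ₀ φ g]
  simp only [TensorProduct.tmul_add, TensorProduct.add_tmul, TensorProduct.tmul_smul,
    ← TensorProduct.smul_tmul', smul_smul]
  module

end Main


set_option synthInstance.maxHeartbeats 400000 in
set_option maxHeartbeats 1000000 in
/-- For a subgroup `H ≤ G` of index 2, one-dimensional characters
`ψ, φ` of `H` over a field of characteristic zero, and conjugate characters
`ψ'(σ) = ψ(σ₀σσ₀⁻¹)`, `φ'(σ) = φ(σ₀σσ₀⁻¹)` for a fixed `σ₀ ∈ G \ H`, there is a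
`G`-equivariant isomorphism `Ind_H^G(ψ) ⊗ Ind_H^G(φ) ≅ Ind_H^G(ψφ) ⊕ Ind_H^G(ψφ')`. -/
theorem ind_tensor_ind_iso_of_index_two
    {k G : Type*} [Field k] [CharZero k] [Group G]
    (H : Subgroup G) (hH : H.index = 2)
    (σ₀ : G) (hσ₀ : σ₀ ∉ H)
    (ψ φ ψ' φ' : H →* kˣ)
    (hψ' : ∀ h h' : H, (h' : G) = σ₀ * h * σ₀⁻¹ → ψ' h = ψ h')
    (hφ' : ∀ h h' : H, (h' : G) = σ₀ * h * σ₀⁻¹ → φ' h = φ h') :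
    ∃ e : (IndSpace H ψ ⊗[k] IndSpace H φ) ≃ₗ[k]
        (IndSpace H (ψ * φ) × IndSpace H (ψ * φ')),
      ∀ (g : G) (x : IndSpace H ψ ⊗[k] IndSpace H φ),
        e (((IndRep H ψ).tprod (IndRep H φ)) g x) =
          ((IndRep H (ψ * φ)) g (e x).1, (IndRep H (ψ * φ')) g (e x).2) := by
  refine ⟨LinearEquiv.ofLinear (TensorProduct.lift (Fmap hH hσ₀ ψ φ φ' hφ'))
    (Gmap hH σ₀ ψ φ φ') (FG_eq_id hH hσ₀ ψ φ φ' hφ') (GF_eq_id hH hσ₀ ψ φ φ' hφ'), ?_⟩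
  intro g x
  induction x using TensorProduct.induction_on with
  | zero => simp; rfl
  | tmul f g' =>
    simp only [LinearEquiv.ofLinear_apply, Representation.tprod_apply,
      TensorProduct.map_tmul, TensorProduct.lift.tmul]
    refine Prod.ext (Subtype.ext ?_) (Subtype.ext ?_) <;> funext x
    · rfl
    · show (f : G → k) (x * g) * (g' : G → k) (σ₀ * x * g)
        = (f : G → k) (x * g) * (g' : G → k) (σ₀ * (x * g))
      rw [mul_assoc]
  | add x y hx hy =>
    simp only [map_add, hx, hy, Prod.fst_add, Prod.snd_add, Prod.mk_add_mk]
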